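/- If a function f : A → B between arrow algebras is monotone with respect to the evidential orders and satisfies conditions (i) and (ii) of an implicative morphism, then it also satisfies condition (iii); hence it is an implicative morphism. -/

import Mathlib

universe u

structure ArrowAlgebra (A : Type u) [CompleteLattice A] where
  arr : A → A → A
  arr_mono : ∀ {a a' b b' : A}, a' ≤ a → b ≤ b' → arr a b ≤ arr a' b'
  S : Set A
  S_up : ∀ {a b : A}, a ∈ S → a ≤ b → b ∈ S
  S_mp : ∀ {a b : A}, arr a b ∈ S → a ∈ S → b ∈ S
  k_mem : (⨅ a : A, ⨅ b : A, arr a (arr b a)) ∈ S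
  s_mem : (⨅ a : A, ⨅ b : A, ⨅ c : A,
      arr (arr a (arr b c)) (arr (arr a b) (arr a c))) ∈ S
  a_mem : ∀ {ι : Type u},
    (⨅ p : A × (ι → A) × (ι → A),
      arr (⨅ i, arr p.1 (arr (p.2.1 i) (p.2.2 i)))
          (arr p.1 (⨅ i, arr (p.2.1 i) (p.2.2 i)))) ∈ S

/-- An implicative morphism of arrow algebras. -/
def IsImplicativeMorphism {A B : Type u} [CompleteLattice A] [CompleteLattice B]
    (𝒜 : ArrowAlgebra A) (ℬ : ArrowAlgebra B) (f : A → B) : Prop :=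
  (∀ a ∈ 𝒜.S, f a ∈ ℬ.S) ∧
  (∃ r ∈ ℬ.S, ∀ a a' : A,
      r ≤ ℬ.arr (f (𝒜.arr a a')) (ℬ.arr (f a) (f a'))) ∧
  (∀ X : Set (A × A),
      (⨅ p ∈ X, 𝒜.arr p.1 p.2) ∈ 𝒜.S →
      (⨅ p ∈ X, ℬ.arr (f p.1) (f p.2)) ∈ ℬ.S)

/-- A monotone function satisfying (i) and (ii) is an implicative morphism. -/
theorem monotone_implicativeMorphism {A B : Type u}
    [CompleteLattice A] [CompleteLattice B]
    (𝒜 : ArrowAlgebra A) (ℬ : ArrowAlgebra B) (f : A → B)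
    (hmono : Monotone f)
    (h1 : ∀ a ∈ 𝒜.S, f a ∈ ℬ.S)
    (h2 : ∃ r ∈ ℬ.S, ∀ a a' : A,
      r ≤ ℬ.arr (f (𝒜.arr a a')) (ℬ.arr (f a) (f a'))) :
    (∀ X : Set (A × A),
      (⨅ p ∈ X, 𝒜.arr p.1 p.2) ∈ 𝒜.S →
      (⨅ p ∈ X, ℬ.arr (f p.1) (f p.2)) ∈ ℬ.S) ∧
    IsImplicativeMorphism 𝒜 ℬ f := by
  obtain ⟨r, hr, hrle⟩ := h2
  have key : ∀ X : Set (A × A),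
      (⨅ p ∈ X, 𝒜.arr p.1 p.2) ∈ 𝒜.S →
      (⨅ p ∈ X, ℬ.arr (f p.1) (f p.2)) ∈ ℬ.S := by
    intro X hX
    set u : A := ⨅ p ∈ X, 𝒜.arr p.1 p.2 with hu
    have hfu : f u ∈ ℬ.S := h1 u hX
    have hP : r ≤ ⨅ i : X, ℬ.arr (f u) (ℬ.arr (f (i : A × A).1) (f (i : A × A).2)) := by
      refine le_iInf fun i => ?_
      have hle : u ≤ 𝒜.arr (i : A × A).1 (i : A × A).2 := iInf₂_le (i : A × A) i.2
      exact (hrle (i : A × A).1 (i : A × A).2).trans (ℬ.arr_mono (hmono hle) le_rfl)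
    have hPmem : (⨅ i : X, ℬ.arr (f u) (ℬ.arr (f (i : A × A).1) (f (i : A × A).2))) ∈ ℬ.S :=
      ℬ.S_up hr hP
    have ha := ℬ.a_mem (ι := X)
    have hale : (⨅ p : B × (X → B) × (X → B),
        ℬ.arr (⨅ i, ℬ.arr p.1 (ℬ.arr (p.2.1 i) (p.2.2 i)))
          (ℬ.arr p.1 (⨅ i, ℬ.arr (p.2.1 i) (p.2.2 i)))) ≤
        ℬ.arr (⨅ i : X, ℬ.arr (f u) (ℬ.arr (f (i : A × A).1) (f (i : A × A).2)))
          (ℬ.arr (f u) (⨅ i : X, ℬ.arr (f (i : A × A).1) (f (i : A × A).2))) :=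
      iInf_le _ (⟨f u, fun i => f (i : A × A).1, fun i => f (i : A × A).2⟩ : B × (X → B) × (X → B))
    have hQ : ℬ.arr (f u) (⨅ i : X, ℬ.arr (f (i : A × A).1) (f (i : A × A).2)) ∈ ℬ.S :=
      ℬ.S_mp (ℬ.S_up ha hale) hPmem
    have hfin : (⨅ i : X, ℬ.arr (f (i : A × A).1) (f (i : A × A).2)) ∈ ℬ.S :=
      ℬ.S_mp hQ hfu
    have heq : (⨅ p ∈ X, ℬ.arr (f p.1) (f p.2)) =
        ⨅ i : X, ℬ.arr (f (i : A × A).1) (f (i : A × A).2) := by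
      exact (iInf_subtype'' X _).symm
    rw [heq]; exact hfin
  exact ⟨key, h1, ⟨r, hr, hrle⟩, key⟩
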